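/- arXiv:2304.12017 — 4 statements merged into one kernel-verified Lean document; each statement's English description precedes it below -/
import Mathlib

section
/- If f is a C² solution of the linear Vlasov equation ∂_t f + v·∇_x f + x·∇_v f = 0, then for each of the vector fields Z ∈ {U_i, S_i, L, R_{ij}}, the function Zf is again a solution of the same equation. -/
/-- Partial derivative in time of `f(t,x,v)`. -/
noncomputable def Dt {n : ℕ} (f : ℝ → (Fin n → ℝ) → (Fin n → ℝ) → ℝ) :
    ℝ → (Fin n → ℝ) → (Fin n → ℝ) → ℝ :=
  fun t x v => deriv (fun s => f s x v) t

/-- Partial derivative `∂_{x^i}` of `f(t,x,v)`. -/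
noncomputable def Dx {n : ℕ} (i : Fin n) (f : ℝ → (Fin n → ℝ) → (Fin n → ℝ) → ℝ) :
    ℝ → (Fin n → ℝ) → (Fin n → ℝ) → ℝ :=
  fun t x v => deriv (fun s => f t (Function.update x i s) v) (x i)

/-- Partial derivative `∂_{v^i}` of `f(t,x,v)`. -/
noncomputable def Dv {n : ℕ} (i : Fin n) (f : ℝ → (Fin n → ℝ) → (Fin n → ℝ) → ℝ) :
    ℝ → (Fin n → ℝ) → (Fin n → ℝ) → ℝ :=
  fun t x v => deriv (fun s => f t x (Function.update v i s)) (v i)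

/-- The transport operator `∂_t + X = ∂_t + v·∇_x + x·∇_v`. -/
noncomputable def Tphi {n : ℕ} (f : ℝ → (Fin n → ℝ) → (Fin n → ℝ) → ℝ) :
    ℝ → (Fin n → ℝ) → (Fin n → ℝ) → ℝ :=
  fun t x v => Dt f t x v + (∑ i, v i * Dx i f t x v) + (∑ i, x i * Dv i f t x v)

/-- Unstable vector field `U_i = e^t(∂_{x^i} + ∂_{v^i})`. -/
noncomputable def Uop {n : ℕ} (i : Fin n) (f : ℝ → (Fin n → ℝ) → (Fin n → ℝ) → ℝ) :
    ℝ → (Fin n → ℝ) → (Fin n → ℝ) → ℝ :=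
  fun t x v => Real.exp t * (Dx i f t x v + Dv i f t x v)

/-- Stable vector field `S_i = e^{-t}(∂_{x^i} − ∂_{v^i})`. -/
noncomputable def Sop {n : ℕ} (i : Fin n) (f : ℝ → (Fin n → ℝ) → (Fin n → ℝ) → ℝ) :
    ℝ → (Fin n → ℝ) → (Fin n → ℝ) → ℝ :=
  fun t x v => Real.exp (-t) * (Dx i f t x v - Dv i f t x v)

/-- Scaling vector field `L = Σᵢ (x^i ∂_{x^i} + v^i ∂_{v^i})`. -/
noncomputable def Lop {n : ℕ} (f : ℝ → (Fin n → ℝ) → (Fin n → ℝ) → ℝ) :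
    ℝ → (Fin n → ℝ) → (Fin n → ℝ) → ℝ :=
  fun t x v => ∑ i, (x i * Dx i f t x v + v i * Dv i f t x v)

/-- Rotation vector field `R_{ij}`. -/
noncomputable def Rop {n : ℕ} (i j : Fin n) (f : ℝ → (Fin n → ℝ) → (Fin n → ℝ) → ℝ) :
    ℝ → (Fin n → ℝ) → (Fin n → ℝ) → ℝ :=
  fun t x v => x i * Dx j f t x v - x j * Dx i f t x v
    + v i * Dv j f t x v - v j * Dv i f t x v


namespace Stmt5Aux

open ContinuousLinearMap

variable {n : ℕ}

/-- The total space. -/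
abbrev EE (n : ℕ) : Type := ℝ × (Fin n → ℝ) × (Fin n → ℝ)

/-- Uncurried version of `f`. -/
abbrev Fn (f : ℝ → (Fin n → ℝ) → (Fin n → ℝ) → ℝ) : EE n → ℝ :=
  fun q => f q.1 q.2.1 q.2.2

lemma Dt_eq {g : ℝ → (Fin n → ℝ) → (Fin n → ℝ) → ℝ} {t : ℝ} {x v : Fin n → ℝ}
    {L : EE n →L[ℝ] ℝ} (h : HasFDerivAt (Fn g) L (t, x, v)) :
    Dt g t x v = L ((1 : ℝ), (0 : Fin n → ℝ), (0 : Fin n → ℝ)) := by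
  have h1 : HasDerivAt (fun s : ℝ => ((s, x, v) : EE n))
      (((1 : ℝ), (0 : Fin n → ℝ), (0 : Fin n → ℝ)) : EE n) t :=
    HasDerivAt.prodMk (hasDerivAt_id t) (hasDerivAt_const _ _)
  exact (h.comp_hasDerivAt t h1).deriv

lemma Dx_eq {g : ℝ → (Fin n → ℝ) → (Fin n → ℝ) → ℝ} {t : ℝ} {x v : Fin n → ℝ}
    {L : EE n →L[ℝ] ℝ} (i : Fin n) (h : HasFDerivAt (Fn g) L (t, x, v)) :
    Dx i g t x v = L ((0 : ℝ), Pi.single i 1, (0 : Fin n → ℝ)) := by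
  have h1 : HasDerivAt (fun s : ℝ => ((t, Function.update x i s, v) : EE n))
      (((0 : ℝ), Pi.single i 1, (0 : Fin n → ℝ)) : EE n) (x i) :=
    HasDerivAt.prodMk (hasDerivAt_const _ _) (HasDerivAt.prodMk (hasDerivAt_update x i (x i)) (hasDerivAt_const _ _))
  have h2 : HasFDerivAt (Fn g) L ((t, Function.update x i (x i), v) : EE n) := by
    rwa [Function.update_eq_self]
  exact (h2.comp_hasDerivAt _ h1).deriv

lemma Dv_eq {g : ℝ → (Fin n → ℝ) → (Fin n → ℝ) → ℝ} {t : ℝ} {x v : Fin n → ℝ}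
    {L : EE n →L[ℝ] ℝ} (i : Fin n) (h : HasFDerivAt (Fn g) L (t, x, v)) :
    Dv i g t x v = L ((0 : ℝ), (0 : Fin n → ℝ), Pi.single i 1) := by
  have h1 : HasDerivAt (fun s : ℝ => ((t, x, Function.update v i s) : EE n))
      (((0 : ℝ), (0 : Fin n → ℝ), Pi.single i 1) : EE n) (v i) :=
    HasDerivAt.prodMk (hasDerivAt_const _ _) (HasDerivAt.prodMk (hasDerivAt_const _ _) (hasDerivAt_update v i (v i)))
  have h2 : HasFDerivAt (Fn g) L ((t, x, Function.update v i (v i)) : EE n) := by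
    rwa [Function.update_eq_self]
  exact (h2.comp_hasDerivAt _ h1).deriv

lemma smul_single_one (c : ℝ) (i : Fin n) :
    c • (Pi.single i 1 : Fin n → ℝ) = Pi.single i c := by
  ext j; by_cases h : j = i <;> simp [Pi.single_apply, h]

lemma sum_smul_x (L : EE n →L[ℝ] ℝ) (y : Fin n → ℝ) :
    ∑ i, y i * L ((0 : ℝ), Pi.single i 1, (0 : Fin n → ℝ))
      = L ((0 : ℝ), y, (0 : Fin n → ℝ)) := by
  have h1 : ∀ i : Fin n, y i * L ((0 : ℝ), Pi.single i 1, (0 : Fin n → ℝ))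
      = L (y i • (((0 : ℝ), Pi.single i 1, (0 : Fin n → ℝ)) : EE n)) := by
    intro i; rw [L.map_smul]; rfl
  rw [Finset.sum_congr rfl fun i _ => h1 i, ← map_sum]
  congr 1
  refine Prod.ext ?_ (Prod.ext ?_ ?_)
  · simp [Prod.fst_sum]
  · simp only [Prod.snd_sum, Prod.fst_sum, Prod.smul_mk, smul_single_one]
    exact Finset.univ_sum_single y
  · simp [Prod.snd_sum]

lemma sum_smul_v (L : EE n →L[ℝ] ℝ) (y : Fin n → ℝ) :
    ∑ i, y i * L ((0 : ℝ), (0 : Fin n → ℝ), Pi.single i 1)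
      = L ((0 : ℝ), (0 : Fin n → ℝ), y) := by
  have h1 : ∀ i : Fin n, y i * L ((0 : ℝ), (0 : Fin n → ℝ), Pi.single i 1)
      = L (y i • (((0 : ℝ), (0 : Fin n → ℝ), Pi.single i 1) : EE n)) := by
    intro i; rw [L.map_smul]; rfl
  rw [Finset.sum_congr rfl fun i _ => h1 i, ← map_sum]
  congr 1
  refine Prod.ext ?_ (Prod.ext ?_ ?_)
  · simp [Prod.fst_sum]
  · simp [Prod.snd_sum, Prod.fst_sum]
  · simp only [Prod.snd_sum, Prod.smul_mk, smul_single_one]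
    exact Finset.univ_sum_single y

lemma Tphi_eq {g : ℝ → (Fin n → ℝ) → (Fin n → ℝ) → ℝ} {t : ℝ} {x v : Fin n → ℝ}
    {L : EE n →L[ℝ] ℝ} (h : HasFDerivAt (Fn g) L (t, x, v)) :
    Tphi g t x v = L ((1 : ℝ), v, x) := by
  have hx : ∀ i : Fin n, Dx i g t x v = L ((0 : ℝ), Pi.single i 1, (0 : Fin n → ℝ)) :=
    fun i => Dx_eq i h
  have hv : ∀ i : Fin n, Dv i g t x v = L ((0 : ℝ), (0 : Fin n → ℝ), Pi.single i 1) :=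
    fun i => Dv_eq i h
  show Dt g t x v + (∑ i, v i * Dx i g t x v) + (∑ i, x i * Dv i g t x v) = _
  rw [Dt_eq h]
  simp only [hx, hv]
  rw [sum_smul_x, sum_smul_v, ← map_add, ← map_add]
  congr 1
  refine Prod.ext (by norm_num) (Prod.ext (by simp) (by simp))

section main

variable (f : ℝ → (Fin n → ℝ) → (Fin n → ℝ) → ℝ)

/-- The key identity coming from differentiating the transport equation. -/
lemma key (hf : ContDiff ℝ 2 (Fn f)) (hsol : ∀ t x v, Tphi f t x v = 0)
    (t : ℝ) (x v : Fin n → ℝ) (u : EE n) :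
    fderiv ℝ (fderiv ℝ (Fn f)) (t, x, v) u ((1 : ℝ), v, x)
      = - fderiv ℝ (Fn f) ((t, x, v) : EE n) ((0 : ℝ), u.2.2, u.2.1) := by
  have hFd : Differentiable ℝ (Fn f) := hf.differentiable two_ne_zero
  have hfd : Differentiable ℝ (fderiv ℝ (Fn f)) :=
    (hf.fderiv_right (m := 1) (by norm_num)).differentiable one_ne_zero
  set σ : EE n →L[ℝ] EE n := (0 : EE n →L[ℝ] ℝ).prod
    ((((snd ℝ (Fin n → ℝ) (Fin n → ℝ)).comp (snd ℝ ℝ ((Fin n → ℝ) × (Fin n → ℝ))))).prod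
      (((fst ℝ (Fin n → ℝ) (Fin n → ℝ)).comp (snd ℝ ℝ ((Fin n → ℝ) × (Fin n → ℝ)))))) with hσ
  have hw : HasFDerivAt (fun q : EE n => (((1 : ℝ), q.2.2, q.2.1) : EE n)) σ ((t, x, v) : EE n) :=
    HasFDerivAt.prodMk (hasFDerivAt_const (1 : ℝ) _)
      (HasFDerivAt.prodMk (hasFDerivAt_snd.comp _ hasFDerivAt_snd) (hasFDerivAt_fst.comp _ hasFDerivAt_snd))
  have hH : (fun q : EE n => fderiv ℝ (Fn f) q (((1 : ℝ), q.2.2, q.2.1) : EE n))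
      = fun _ => (0 : ℝ) := by
    funext q
    have h := Tphi_eq (g := f) (t := q.1) (x := q.2.1) (v := q.2.2) (hFd q).hasFDerivAt
    rw [hsol q.1 q.2.1 q.2.2] at h
    exact h.symm
  have hD : HasFDerivAt (fun q : EE n => fderiv ℝ (Fn f) q (((1 : ℝ), q.2.2, q.2.1) : EE n))
      ((fderiv ℝ (Fn f) ((t, x, v) : EE n)).comp σ
        + (fderiv ℝ (fderiv ℝ (Fn f)) ((t, x, v) : EE n)).flip (((1 : ℝ), v, x) : EE n))
      ((t, x, v) : EE n) :=
    (hfd _).hasFDerivAt.clm_apply hw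
  have hD0 : HasFDerivAt (fun q : EE n => fderiv ℝ (Fn f) q (((1 : ℝ), q.2.2, q.2.1) : EE n))
      (0 : EE n →L[ℝ] ℝ) ((t, x, v) : EE n) := by
    rw [hH]; exact hasFDerivAt_const _ _
  have h0 := hD0.unique hD
  have h2 := DFunLike.congr_fun h0 u
  simp only [ContinuousLinearMap.zero_apply, ContinuousLinearMap.add_apply,
    ContinuousLinearMap.coe_comp', Function.comp_apply, ContinuousLinearMap.flip_apply] at h2
  have hσu : σ u = (((0 : ℝ), u.2.2, u.2.1) : EE n) := rfl
  rw [hσu] at h2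
  linarith

lemma symm2 (hf : ContDiff ℝ 2 (Fn f)) (p a b : EE n) :
    fderiv ℝ (fderiv ℝ (Fn f)) p a b = fderiv ℝ (fderiv ℝ (Fn f)) p b a := by
  have hFd : Differentiable ℝ (Fn f) := hf.differentiable two_ne_zero
  have hfd : Differentiable ℝ (fderiv ℝ (Fn f)) :=
    (hf.fderiv_right (m := 1) (by norm_num)).differentiable one_ne_zero
  exact second_derivative_symmetric (fun y => (hFd y).hasFDerivAt) (hfd p).hasFDerivAt a b

lemma partU (hf : ContDiff ℝ 2 (Fn f)) (hsol : ∀ t x v, Tphi f t x v = 0)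
    (i : Fin n) (t : ℝ) (x v : Fin n → ℝ) : Tphi (Uop i f) t x v = 0 := by
  have hFd : Differentiable ℝ (Fn f) := hf.differentiable two_ne_zero
  have hfd : Differentiable ℝ (fderiv ℝ (Fn f)) :=
    (hf.fderiv_right (m := 1) (by norm_num)).differentiable one_ne_zero
  set u0 : EE n := ((0 : ℝ), Pi.single i 1, Pi.single i 1) with hu0
  have hGU : (Fn (Uop i f)) = fun q : EE n => Real.exp q.1 * fderiv ℝ (Fn f) q u0 := by
    funext q
    show Real.exp q.1 * (Dx i f q.1 q.2.1 q.2.2 + Dv i f q.1 q.2.1 q.2.2) = _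
    rw [Dx_eq i (hFd q).hasFDerivAt, Dv_eq i (hFd q).hasFDerivAt, ← map_add]
    congr 2
    refine Prod.ext (by norm_num) (Prod.ext (by simp [hu0]) (by simp [hu0]))
  have hexp : HasFDerivAt (fun q : EE n => Real.exp q.1)
      (Real.exp t • (fst ℝ ℝ ((Fin n → ℝ) × (Fin n → ℝ)))) ((t, x, v) : EE n) :=
    (HasFDerivAt.exp (hasFDerivAt_fst (p := ((t, x, v) : EE n)))).congr_fderiv
      (ContinuousLinearMap.ext fun q => by simp)
  have hC : HasFDerivAt (fun q : EE n => fderiv ℝ (Fn f) q u0)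
      ((fderiv ℝ (fderiv ℝ (Fn f)) ((t, x, v) : EE n)).flip u0) ((t, x, v) : EE n) := by
    have h := (hfd _).hasFDerivAt.clm_apply (hasFDerivAt_const u0 ((t, x, v) : EE n))
    simpa using h
  have hG : HasFDerivAt (fun q : EE n => Real.exp q.1 * fderiv ℝ (Fn f) q u0) _ _ := hexp.mul hC
  rw [← hGU] at hG
  rw [Tphi_eq hG]
  simp only [ContinuousLinearMap.add_apply, ContinuousLinearMap.smul_apply,
    ContinuousLinearMap.flip_apply, ContinuousLinearMap.coe_fst', smul_eq_mul]
  rw [symm2 f hf _ _ u0, key f hf hsol t x v u0]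
  have h4 : (((0:ℝ), u0.2.2, u0.2.1) : EE n) = u0 := rfl
  rw [h4]; ring

lemma partS (hf : ContDiff ℝ 2 (Fn f)) (hsol : ∀ t x v, Tphi f t x v = 0)
    (i : Fin n) (t : ℝ) (x v : Fin n → ℝ) : Tphi (Sop i f) t x v = 0 := by
  have hFd : Differentiable ℝ (Fn f) := hf.differentiable two_ne_zero
  have hfd : Differentiable ℝ (fderiv ℝ (Fn f)) :=
    (hf.fderiv_right (m := 1) (by norm_num)).differentiable one_ne_zero
  set u1 : EE n := ((0 : ℝ), Pi.single i 1, -Pi.single i 1) with hu1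
  have hGS : (Fn (Sop i f)) = fun q : EE n => Real.exp (-q.1) * fderiv ℝ (Fn f) q u1 := by
    funext q
    show Real.exp (-q.1) * (Dx i f q.1 q.2.1 q.2.2 - Dv i f q.1 q.2.1 q.2.2) = _
    rw [Dx_eq i (hFd q).hasFDerivAt, Dv_eq i (hFd q).hasFDerivAt, ← map_sub]
    congr 2
    refine Prod.ext (by norm_num) (Prod.ext (by simp [hu1]) (by simp [hu1]))
  have hexp : HasFDerivAt (fun q : EE n => Real.exp (-q.1))
      ((-Real.exp (-t)) • (fst ℝ ℝ ((Fin n → ℝ) × (Fin n → ℝ)))) ((t, x, v) : EE n) := by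
    have h1 : HasDerivAt (fun r : ℝ => Real.exp (-r)) (-Real.exp (-t)) t := by
      simpa using (hasDerivAt_neg t).exp
    exact (HasFDerivAt.exp (hasFDerivAt_fst (p := ((t, x, v) : EE n))).neg).congr_fderiv
      (ContinuousLinearMap.ext fun q => by simp)
  have hC : HasFDerivAt (fun q : EE n => fderiv ℝ (Fn f) q u1)
      ((fderiv ℝ (fderiv ℝ (Fn f)) ((t, x, v) : EE n)).flip u1) ((t, x, v) : EE n) := by
    have h := (hfd _).hasFDerivAt.clm_apply (hasFDerivAt_const u1 ((t, x, v) : EE n))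
    simpa using h
  have hG : HasFDerivAt (fun q : EE n => Real.exp (-q.1) * fderiv ℝ (Fn f) q u1) _ _ := hexp.mul hC
  rw [← hGS] at hG
  rw [Tphi_eq hG]
  simp only [ContinuousLinearMap.add_apply, ContinuousLinearMap.smul_apply,
    ContinuousLinearMap.flip_apply, ContinuousLinearMap.coe_fst', smul_eq_mul]
  rw [symm2 f hf _ _ u1, key f hf hsol t x v u1]
  have h3 : (((0:ℝ), u1.2.2, u1.2.1) : EE n) = -u1 := by
    refine Prod.ext (by norm_num) (Prod.ext (by simp [hu1]) (by simp [hu1]))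
  rw [h3, map_neg]
  ring

lemma partL (hf : ContDiff ℝ 2 (Fn f)) (hsol : ∀ t x v, Tphi f t x v = 0)
    (t : ℝ) (x v : Fin n → ℝ) : Tphi (Lop f) t x v = 0 := by
  have hFd : Differentiable ℝ (Fn f) := hf.differentiable two_ne_zero
  have hfd : Differentiable ℝ (fderiv ℝ (Fn f)) :=
    (hf.fderiv_right (m := 1) (by norm_num)).differentiable one_ne_zero
  set μ : EE n →L[ℝ] EE n :=
    (0 : EE n →L[ℝ] ℝ).prod (snd ℝ ℝ ((Fin n → ℝ) × (Fin n → ℝ))) with hμ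
  have hGL : (Fn (Lop f)) = fun q : EE n => fderiv ℝ (Fn f) q (μ q) := by
    funext q
    show (∑ i, (q.2.1 i * Dx i f q.1 q.2.1 q.2.2 + q.2.2 i * Dv i f q.1 q.2.1 q.2.2)) = _
    have hx : ∀ i : Fin n, Dx i f q.1 q.2.1 q.2.2
        = fderiv ℝ (Fn f) q ((0 : ℝ), Pi.single i 1, (0 : Fin n → ℝ)) :=
      fun i => Dx_eq i (hFd q).hasFDerivAt
    have hv : ∀ i : Fin n, Dv i f q.1 q.2.1 q.2.2
        = fderiv ℝ (Fn f) q ((0 : ℝ), (0 : Fin n → ℝ), Pi.single i 1) :=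
      fun i => Dv_eq i (hFd q).hasFDerivAt
    simp only [hx, hv]
    rw [Finset.sum_add_distrib, sum_smul_x, sum_smul_v, ← map_add]
    congr 1
    refine Prod.ext (by simp [hμ]) (Prod.ext (by simp [hμ]) (by simp [hμ]))
  have hG : HasFDerivAt (fun q : EE n => fderiv ℝ (Fn f) q (μ q))
      ((fderiv ℝ (Fn f) ((t, x, v) : EE n)).comp μ
        + (fderiv ℝ (fderiv ℝ (Fn f)) ((t, x, v) : EE n)).flip (μ ((t, x, v) : EE n)))
      ((t, x, v) : EE n) :=
    (hfd _).hasFDerivAt.clm_apply (μ.hasFDerivAt)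
  rw [← hGL] at hG
  rw [Tphi_eq hG]
  simp only [ContinuousLinearMap.add_apply, ContinuousLinearMap.coe_comp',
    Function.comp_apply, ContinuousLinearMap.flip_apply]
  rw [symm2 f hf _ (((1:ℝ), v, x) : EE n) (μ ((t,x,v) : EE n)),
    key f hf hsol t x v (μ ((t,x,v) : EE n))]
  have h1 : μ (((1:ℝ), v, x) : EE n) = (((0:ℝ), v, x) : EE n) := rfl
  have h2 : (((0:ℝ), (μ ((t,x,v) : EE n)).2.2, (μ ((t,x,v) : EE n)).2.1) : EE n)
      = (((0:ℝ), v, x) : EE n) := rfl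
  rw [h1, h2]
  ring

lemma partR (hf : ContDiff ℝ 2 (Fn f)) (hsol : ∀ t x v, Tphi f t x v = 0)
    (i j : Fin n) (t : ℝ) (x v : Fin n → ℝ) : Tphi (Rop i j f) t x v = 0 := by
  have hFd : Differentiable ℝ (Fn f) := hf.differentiable two_ne_zero
  have hfd : Differentiable ℝ (fderiv ℝ (Fn f)) :=
    (hf.fderiv_right (m := 1) (by norm_num)).differentiable one_ne_zero
  set cX : Fin n → (EE n →L[ℝ] ℝ) := fun k =>
    (proj k).comp ((fst ℝ (Fin n → ℝ) (Fin n → ℝ)).comp (snd ℝ ℝ ((Fin n → ℝ) × (Fin n → ℝ)))) with hcX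
  set cV : Fin n → (EE n →L[ℝ] ℝ) := fun k =>
    (proj k).comp ((snd ℝ (Fin n → ℝ) (Fin n → ℝ)).comp (snd ℝ ℝ ((Fin n → ℝ) × (Fin n → ℝ)))) with hcV
  set ρ : EE n →L[ℝ] EE n := (0 : EE n →L[ℝ] ℝ).prod
    ((ContinuousLinearMap.smulRight (cX i) (Pi.single j 1 : Fin n → ℝ)
        - ContinuousLinearMap.smulRight (cX j) (Pi.single i 1 : Fin n → ℝ)).prod
      (ContinuousLinearMap.smulRight (cV i) (Pi.single j 1 : Fin n → ℝ)
        - ContinuousLinearMap.smulRight (cV j) (Pi.single i 1 : Fin n → ℝ))) with hρ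
  have hρ_apply : ∀ q : EE n, ρ q = (((0 : ℝ),
      q.2.1 i • (Pi.single j 1 : Fin n → ℝ) - q.2.1 j • (Pi.single i 1 : Fin n → ℝ),
      q.2.2 i • (Pi.single j 1 : Fin n → ℝ) - q.2.2 j • (Pi.single i 1 : Fin n → ℝ)) : EE n) :=
    fun q => rfl
  have hGR : (Fn (Rop i j f)) = fun q : EE n => fderiv ℝ (Fn f) q (ρ q) := by
    funext q
    show q.2.1 i * Dx j f q.1 q.2.1 q.2.2 - q.2.1 j * Dx i f q.1 q.2.1 q.2.2
        + q.2.2 i * Dv j f q.1 q.2.1 q.2.2 - q.2.2 j * Dv i f q.1 q.2.1 q.2.2 = _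
    rw [Dx_eq i (hFd q).hasFDerivAt, Dx_eq j (hFd q).hasFDerivAt,
      Dv_eq i (hFd q).hasFDerivAt, Dv_eq j (hFd q).hasFDerivAt]
    have hdec : ρ q = q.2.1 i • (((0:ℝ), Pi.single j 1, (0 : Fin n → ℝ)) : EE n)
        - q.2.1 j • (((0:ℝ), Pi.single i 1, (0 : Fin n → ℝ)) : EE n)
        + q.2.2 i • (((0:ℝ), (0 : Fin n → ℝ), Pi.single j 1) : EE n)
        - q.2.2 j • (((0:ℝ), (0 : Fin n → ℝ), Pi.single i 1) : EE n) := by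
      rw [hρ_apply q]
      refine Prod.ext (by norm_num) (Prod.ext (by simp) (by simp))
    rw [hdec, map_sub, map_add, map_sub, map_smul, map_smul, map_smul, map_smul]
    simp [smul_eq_mul]
  have hG : HasFDerivAt (fun q : EE n => fderiv ℝ (Fn f) q (ρ q))
      ((fderiv ℝ (Fn f) ((t, x, v) : EE n)).comp ρ
        + (fderiv ℝ (fderiv ℝ (Fn f)) ((t, x, v) : EE n)).flip (ρ ((t, x, v) : EE n)))
      ((t, x, v) : EE n) :=
    (hfd _).hasFDerivAt.clm_apply (ρ.hasFDerivAt)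
  rw [← hGR] at hG
  rw [Tphi_eq hG]
  simp only [ContinuousLinearMap.add_apply, ContinuousLinearMap.coe_comp',
    Function.comp_apply, ContinuousLinearMap.flip_apply]
  rw [symm2 f hf _ (((1:ℝ), v, x) : EE n) (ρ ((t,x,v) : EE n)),
    key f hf hsol t x v (ρ ((t,x,v) : EE n))]
  have h2 : (((0:ℝ), (ρ ((t,x,v) : EE n)).2.2, (ρ ((t,x,v) : EE n)).2.1) : EE n)
      = ρ (((1:ℝ), v, x) : EE n) := rfl
  rw [h2]
  ring

end main

end Stmt5Aux

/-- if `f` is a `C²` solution of the linear Vlasov equation, then `Zf` is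
again a solution for each `Z ∈ {U_i, S_i, L, R_{ij}}`. -/
theorem stmt5 {n : ℕ} (f : ℝ → (Fin n → ℝ) → (Fin n → ℝ) → ℝ)
    (hf : ContDiff ℝ 2 (fun p : ℝ × (Fin n → ℝ) × (Fin n → ℝ) => f p.1 p.2.1 p.2.2))
    (hsol : ∀ t x v, Tphi f t x v = 0) :
    (∀ (i : Fin n), ∀ t x v, Tphi (Uop i f) t x v = 0) ∧
    (∀ (i : Fin n), ∀ t x v, Tphi (Sop i f) t x v = 0) ∧
    (∀ t x v, Tphi (Lop f) t x v = 0) ∧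
    (∀ (i j : Fin n), ∀ t x v, Tphi (Rop i j f) t x v = 0) := by
  refine ⟨fun i t x v => Stmt5Aux.partU f hf hsol i t x v,
    fun i t x v => Stmt5Aux.partS f hf hsol i t x v,
    fun t x v => Stmt5Aux.partL f hf hsol t x v,
    fun i j t x v => Stmt5Aux.partR f hf hsol i j t x v⟩
end

section
/- For every n ≥ 2 there exists a constant C_n > 0 such that for all t ≥ 0 and x ∈ ℝⁿ, ∫_{ℝⁿ} dy / (|y|^{n−1} (e^t + |x−y|)ⁿ) ≤ C_n e^{−(n−1)t}. -/
open MeasureTheory Metric Set Module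

/-- auxiliary radial profile -/
noncomputable def auxg (n : ℕ) (r : ℝ) : ℝ := 1 / (r ^ (n - 1) * (1 + r) ^ n)

lemma auxg_nonneg (n : ℕ) {r : ℝ} (hr : 0 ≤ r) : 0 ≤ auxg n r := by
  unfold auxg; positivity

lemma aux_integrable (n : ℕ) (hn : 2 ≤ n) :
    Integrable (fun x : EuclideanSpace ℝ (Fin n) => auxg n ‖x‖) := by
  haveI : Nonempty (Fin n) := ⟨⟨0, by omega⟩⟩
  haveI : Nontrivial (EuclideanSpace ℝ (Fin n)) := by
    refine nontrivial_of_ne (EuclideanSpace.single ⟨0, by omega⟩ (1:ℝ)) 0 ?_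
    intro h
    have := congrArg (fun v : EuclideanSpace ℝ (Fin n) => v ⟨0, by omega⟩) h
    simp [EuclideanSpace.single_apply] at this
  -- step 1 : 1D integrability with weight
  have step1 : IntegrableOn (fun r : ℝ => auxg n r * r ^ (n - 1)) (Ioi (0:ℝ)) := by
    have hint : Integrable (fun r : ℝ => (1 + ‖r‖) ^ (-(n:ℝ))) := by
      apply integrable_one_add_norm
      rw [finrank_self]
      exact_mod_cast by omega
    refine (hint.integrableOn).congr_fun ?_ measurableSet_Ioi
    intro r hr
    have hr0 : (0:ℝ) < r := hr
    have h1r : (0:ℝ) < 1 + r := by linarith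
    have h2 : r ^ (n - 1) ≠ 0 := pow_ne_zero _ hr0.ne'
    have h3 : (1 + r) ^ n ≠ 0 := pow_ne_zero _ h1r.ne'
    show (1 + ‖r‖) ^ (-(n:ℝ)) = auxg n r * r ^ (n - 1)
    rw [Real.norm_eq_abs, abs_of_pos hr0, Real.rpow_neg h1r.le, Real.rpow_natCast]
    unfold auxg
    field_simp
  -- step 2 : integrability wrt volumeIoiPow (n-1)
  have step2 : Integrable (fun r : Ioi (0:ℝ) => auxg n (r : ℝ))
      (Measure.volumeIoiPow (n - 1)) := by
    rw [Measure.volumeIoiPow, integrable_withDensity_iff (by measurability)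
      (Filter.Eventually.of_forall fun _ => ENNReal.ofReal_lt_top)]
    have heq : (fun r : Ioi (0:ℝ) => auxg n (r:ℝ) * (ENNReal.ofReal ((r:ℝ) ^ (n-1))).toReal)
        = (fun s : ℝ => auxg n s * s ^ (n-1)) ∘ (Subtype.val : Ioi (0:ℝ) → ℝ) := by
      funext r
      simp only [Function.comp_apply]
      rw [ENNReal.toReal_ofReal (pow_nonneg (le_of_lt r.2) _)]
    rw [heq]
    have hiff := (MeasurableEmbedding.subtype_coe (measurableSet_Ioi (a := (0:ℝ)))).integrable_map_iff
      (μ := Measure.comap (Subtype.val : Ioi (0:ℝ) → ℝ) volume)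
      (g := fun s : ℝ => auxg n s * s ^ (n-1))
    rw [map_comap_subtype_coe measurableSet_Ioi] at hiff
    exact hiff.mp step1
  -- step 3 : integrability on the product
  have step3 : Integrable
      (fun p : sphere (0 : EuclideanSpace ℝ (Fin n)) 1 × Ioi (0:ℝ) => auxg n (p.2 : ℝ))
      ((volume : Measure (EuclideanSpace ℝ (Fin n))).toSphere.prod
        (Measure.volumeIoiPow (finrank ℝ (EuclideanSpace ℝ (Fin n)) - 1))) := by
    rw [finrank_euclideanSpace_fin]
    have h1 : Integrable (fun _ : sphere (0 : EuclideanSpace ℝ (Fin n)) 1 => (1:ℝ))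
        (volume : Measure (EuclideanSpace ℝ (Fin n))).toSphere := integrable_const _
    simpa using h1.mul_prod step2
  -- step 4 : transfer through the polar-coordinates homeomorphism
  have step4 : Integrable
      (fun x : ({0}ᶜ : Set (EuclideanSpace ℝ (Fin n))) =>
        auxg n ‖(x : EuclideanSpace ℝ (Fin n))‖)
      (Measure.comap Subtype.val volume) := by
    have hmp := Measure.measurePreserving_homeomorphUnitSphereProd
      (volume : Measure (EuclideanSpace ℝ (Fin n)))
    have h := (hmp.integrable_comp_emb (Homeomorph.measurableEmbedding _)
      (g := fun p : sphere (0 : EuclideanSpace ℝ (Fin n)) 1 × Ioi (0:ℝ) =>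
        auxg n (p.2 : ℝ))).mpr step3
    have heq : ((fun p : sphere (0 : EuclideanSpace ℝ (Fin n)) 1 × Ioi (0:ℝ) =>
        auxg n (p.2 : ℝ)) ∘ (homeomorphUnitSphereProd (EuclideanSpace ℝ (Fin n))))
        = fun x : ({0}ᶜ : Set (EuclideanSpace ℝ (Fin n))) =>
          auxg n ‖(x : EuclideanSpace ℝ (Fin n))‖ := by
      funext x
      simp [Function.comp_apply]
    rwa [heq] at h
  -- step 5 : conclude
  have hiff := (MeasurableEmbedding.subtype_coe
      (measurableSet_singleton (0 : EuclideanSpace ℝ (Fin n))).compl).integrable_map_iff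
    (μ := Measure.comap (Subtype.val : ({0}ᶜ : Set (EuclideanSpace ℝ (Fin n))) → EuclideanSpace ℝ (Fin n)) volume)
    (g := fun x : EuclideanSpace ℝ (Fin n) => auxg n ‖x‖)
  rw [map_comap_subtype_coe (measurableSet_singleton _).compl,
    restrict_compl_singleton] at hiff
  exact hiff.mpr step4

/-- The Euclidean norm on `Fin n → ℝ`. -/
noncomputable def euclNorm {n : ℕ} (x : Fin n → ℝ) : ℝ := Real.sqrt (∑ i, x i ^ 2)

lemma euclNorm_eq {n : ℕ} (z : EuclideanSpace ℝ (Fin n)) :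
    euclNorm ((MeasurableEquiv.toLp 2 (Fin n → ℝ)).symm z) = ‖z‖ := by
  rw [EuclideanSpace.norm_eq, euclNorm]
  congr 1
  refine Finset.sum_congr rfl fun i _ => ?_
  rw [Real.norm_eq_abs, sq_abs]
  rfl

lemma euclNorm_sub {n : ℕ} (x : Fin n → ℝ) (z : EuclideanSpace ℝ (Fin n)) :
    euclNorm (x - (MeasurableEquiv.toLp 2 (Fin n → ℝ)).symm z)
      = ‖((MeasurableEquiv.toLp 2 (Fin n → ℝ)).symm).symm x - z‖ := by
  rw [← euclNorm_eq]
  congr 1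

lemma aux_pointwise (n : ℕ) (hn : 2 ≤ n) {R a b : ℝ} (hR : 0 < R) (ha : 0 ≤ a) (hb : 0 < b) :
    1 / (a ^ (n-1) * (R + b) ^ n)
      ≤ 1 / (a ^ (n-1) * (R + a) ^ n) + 1 / (b ^ (n-1) * (R + b) ^ n) := by
  rcases eq_or_lt_of_le ha with h0 | ha'
  · rw [← h0, zero_pow (by omega : n - 1 ≠ 0), zero_mul, zero_mul]
    have : (0:ℝ) ≤ 1 / (b ^ (n-1) * (R + b) ^ n) := by positivity
    simpa using this
  · rcases le_total a b with hab | hab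
    · have h1 : (0:ℝ) < a^(n-1)*(R+a)^n := by positivity
      have h2 : a^(n-1)*(R+a)^n ≤ a^(n-1)*(R+b)^n := by gcongr
      have h3 := one_div_le_one_div_of_le h1 h2
      have h4 : (0:ℝ) ≤ 1/(b^(n-1)*(R+b)^n) := by positivity
      linarith
    · have h1 : (0:ℝ) < b^(n-1)*(R+b)^n := by positivity
      have h2 : b^(n-1)*(R+b)^n ≤ a^(n-1)*(R+b)^n := by gcongr
      have h3 := one_div_le_one_div_of_le h1 h2
      have h4 : (0:ℝ) ≤ 1/(a^(n-1)*(R+a)^n) := by positivity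
      linarith

lemma aux_le (n : ℕ) (hn : 2 ≤ n) {R r : ℝ} (hR : 1 ≤ R) (hr : 0 ≤ r) :
    1 / (r ^ (n-1) * (R + r) ^ n) ≤ auxg n r := by
  rcases eq_or_lt_of_le hr with h0 | hr'
  · simp [← h0, auxg, zero_pow (show n-1 ≠ 0 by omega)]
  · unfold auxg
    apply one_div_le_one_div_of_le (by positivity)
    gcongr

/-- for `n ≥ 2` there is `C_n > 0` with
`∫ dy / (|y|^{n−1} (e^t + |x−y|)ⁿ) ≤ C_n e^{−(n−1)t}` for all `t ≥ 0`, `x ∈ ℝⁿ`. -/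
theorem stmt10 (n : ℕ) (hn : 2 ≤ n) :
    ∃ C > 0, ∀ t : ℝ, 0 ≤ t → ∀ x : Fin n → ℝ,
      (∫ y : Fin n → ℝ, 1 / (euclNorm y ^ (n - 1) * (Real.exp t + euclNorm (x - y)) ^ n))
        ≤ C * Real.exp (-((n : ℝ) - 1) * t) := by
  classical
  haveI : Nonempty (Fin n) := ⟨⟨0, by omega⟩⟩
  haveI : Nontrivial (EuclideanSpace ℝ (Fin n)) := by
    refine nontrivial_of_ne (EuclideanSpace.single ⟨0, by omega⟩ (1:ℝ)) 0 ?_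
    intro h
    have := congrArg (fun v : EuclideanSpace ℝ (Fin n) => v ⟨0, by omega⟩) h
    simp [EuclideanSpace.single_apply] at this
  set I : ℝ := ∫ x : EuclideanSpace ℝ (Fin n), auxg n ‖x‖ with hIdef
  have hI0 : 0 ≤ I := integral_nonneg fun x => auxg_nonneg n (norm_nonneg x)
  refine ⟨2 * I + 1, by positivity, ?_⟩
  intro t ht x
  have hR0 : (0:ℝ) < Real.exp t := Real.exp_pos t
  have hR1 : (1:ℝ) ≤ Real.exp t := Real.one_le_exp ht
  set R : ℝ := Real.exp t with hRdef
  set x₀ : EuclideanSpace ℝ (Fin n) := ((MeasurableEquiv.toLp 2 (Fin n → ℝ)).symm).symm x with hx₀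
  -- transfer the integral to Euclidean space
  have htrans : (∫ y : Fin n → ℝ, 1 / (euclNorm y ^ (n - 1) * (R + euclNorm (x - y)) ^ n))
      = ∫ z : EuclideanSpace ℝ (Fin n), 1 / (‖z‖ ^ (n - 1) * (R + ‖x₀ - z‖) ^ n) := by
    rw [← (EuclideanSpace.volume_preserving_symm_measurableEquiv_toLp (Fin n)).integral_comp
      ((MeasurableEquiv.toLp 2 (Fin n → ℝ)).symm).measurableEmbedding
      (fun y => 1 / (euclNorm y ^ (n - 1) * (R + euclNorm (x - y)) ^ n))]
    congr 1
    funext z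
    rw [euclNorm_eq, euclNorm_sub]
  rw [htrans]
  set F : EuclideanSpace ℝ (Fin n) → ℝ := fun z => 1 / (‖z‖ ^ (n - 1) * (R + ‖z‖) ^ n) with hF
  have hF0 : ∀ z, 0 ≤ F z := fun z =>
    one_div_nonneg.mpr (by positivity)
  have hFmeas : AEStronglyMeasurable F volume := by
    apply Measurable.aestronglyMeasurable
    fun_prop
  have hFint : Integrable F := by
    refine (aux_integrable n hn).mono' hFmeas (Filter.Eventually.of_forall fun z => ?_)
    rw [Real.norm_eq_abs, abs_of_nonneg (hF0 z)]
    exact aux_le n hn hR1 (norm_nonneg z)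
  have hGint : Integrable (fun z => F (x₀ - z)) := hFint.comp_sub_left x₀
  have hae : ∀ᵐ z : EuclideanSpace ℝ (Fin n) ∂volume,
      1 / (‖z‖ ^ (n - 1) * (R + ‖x₀ - z‖) ^ n) ≤ F z + F (x₀ - z) := by
    have h0 : ∀ᵐ z : EuclideanSpace ℝ (Fin n) ∂volume, z ≠ x₀ := by
      have hs : {z : EuclideanSpace ℝ (Fin n) | ¬ z ≠ x₀} = {x₀} := by ext z; simp
      rw [ae_iff, hs, measure_singleton]
    filter_upwards [h0] with z hz
    have hb : 0 < ‖x₀ - z‖ := by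
      rw [norm_pos_iff, sub_ne_zero]
      exact hz.symm
    exact aux_pointwise n hn hR0 (norm_nonneg z) hb
  have hmain : (∫ z : EuclideanSpace ℝ (Fin n), 1 / (‖z‖ ^ (n - 1) * (R + ‖x₀ - z‖) ^ n))
      ≤ 2 * ∫ z, F z := by
    calc (∫ z : EuclideanSpace ℝ (Fin n), 1 / (‖z‖ ^ (n - 1) * (R + ‖x₀ - z‖) ^ n))
        ≤ ∫ z, (F z + F (x₀ - z)) := by
          refine integral_mono_of_nonneg
            (Filter.Eventually.of_forall fun z => one_div_nonneg.mpr (by positivity))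
            (hFint.add hGint) hae
      _ = (∫ z, F z) + ∫ z, F (x₀ - z) := integral_add hFint hGint
      _ = 2 * ∫ z, F z := by
          rw [integral_sub_left_eq_self F volume x₀]; ring
  -- scaling
  have hscale : (∫ z, F z) = (R ^ (n-1))⁻¹ * I := by
    have h := Measure.integral_comp_smul_of_nonneg
      (volume : Measure (EuclideanSpace ℝ (Fin n))) F R (hR := hR0.le)
    rw [finrank_euclideanSpace_fin] at h
    have h2 : (fun z : EuclideanSpace ℝ (Fin n) => F (R • z))
        = fun z => (R^(n-1) * R^n)⁻¹ * auxg n ‖z‖ := by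
      funext z
      rw [hF]
      simp only
      have hnz : ‖R • z‖ = R * ‖z‖ := by
        rw [norm_smul, Real.norm_eq_abs, abs_of_pos hR0]
      rw [hnz]
      have hden : (R*‖z‖)^(n-1) * (R + R*‖z‖)^n
          = (R^(n-1)*R^n) * (‖z‖^(n-1)*(1+‖z‖)^n) := by
        rw [show R + R*‖z‖ = R*(1+‖z‖) by ring, mul_pow, mul_pow]
        ring
      rw [hden, auxg, one_div, one_div, mul_inv]
    rw [h2, integral_const_mul, smul_eq_mul] at h
    have hRn : (R:ℝ)^n ≠ 0 := pow_ne_zero _ hR0.ne'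
    have hRn1 : (R:ℝ)^(n-1) ≠ 0 := pow_ne_zero _ hR0.ne'
    rw [← hIdef] at h
    have key : (R^(n-1) * R^n)⁻¹ * I = (R^n)⁻¹ * ((R^(n-1))⁻¹ * I) := by
      rw [mul_inv]; ring
    rw [key] at h
    exact (mul_left_cancel₀ (inv_ne_zero hRn) h).symm
  have hexp : Real.exp (-((n:ℝ)-1)*t) = (R ^ (n-1))⁻¹ := by
    have hcast : -((n:ℝ)-1)*t = -(((n-1:ℕ):ℝ)*t) := by
      rw [Nat.cast_sub (by omega : 1 ≤ n)]
      push_cast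
      ring
    rw [hcast, Real.exp_neg, Real.exp_nat_mul]
  rw [hexp]
  have hinv : (0:ℝ) < (R ^ (n-1))⁻¹ := by positivity
  calc (∫ z : EuclideanSpace ℝ (Fin n), 1 / (‖z‖ ^ (n - 1) * (R + ‖x₀ - z‖) ^ n))
      ≤ 2 * ∫ z, F z := hmain
    _ = 2 * ((R ^ (n-1))⁻¹ * I) := by rw [hscale]
    _ ≤ (2 * I + 1) * (R ^ (n-1))⁻¹ := by nlinarith
end

section
/- Under the hypotheses of the previous statement (F continuous with |F(t,y)| ≤ A e^{−t}), if x + v = ∫₀^∞ e^{−s} F(s, X(s,x,v)) ds, then |X(t,x,v) + V(t,x,v)| ≤ (A/2) e^{−t} for all t ≥ 0; in particular e^t(x + v − ∫₀^t e^{−s}F(s,X(s))ds) → 0 as t → ∞. -/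
open MeasureTheory Filter

/-- if `x + v = ∫₀^∞ e^{−s} F(s,X(s)) ds`, then
`|X(t)+V(t)| ≤ (A/2) e^{−t}` for all `t ≥ 0`, and
`e^t (x + v − ∫₀^t e^{−s} F(s,X(s)) ds) → 0` as `t → ∞`. -/
theorem stmt14 {n : ℕ} (F : ℝ → (Fin n → ℝ) → (Fin n → ℝ))
    (hF : Continuous (fun p : ℝ × (Fin n → ℝ) => F p.1 p.2))
    (A : ℝ) (hA : 0 < A)
    (hFbound : ∀ t : ℝ, 0 ≤ t → ∀ y : Fin n → ℝ, euclNorm (F t y) ≤ A * Real.exp (-t))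
    (X V : ℝ → Fin n → ℝ) (x v : Fin n → ℝ)
    (hX0 : X 0 = x) (hV0 : V 0 = v)
    (hX : ∀ t : ℝ, 0 ≤ t → HasDerivAt X (V t) t)
    (hV : ∀ t : ℝ, 0 ≤ t → HasDerivAt V (X t - F t (X t)) t)
    (hxv : x + v = ∫ s in Set.Ioi (0:ℝ), Real.exp (-s) • F s (X s)) :
    (∀ t : ℝ, 0 ≤ t → euclNorm (X t + V t) ≤ (A / 2) * Real.exp (-t)) ∧
    Tendsto
      (fun t => Real.exp t • (x + v - ∫ s in (0:ℝ)..t, Real.exp (-s) • F s (X s)))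
      atTop (nhds 0) := by
  set e : (Fin n → ℝ) ≃L[ℝ] EuclideanSpace ℝ (Fin n) := (EuclideanSpace.equiv (Fin n) ℝ).symm
    with he
  have heapp : ∀ (y : Fin n → ℝ) i, e y i = y i := fun y i => rfl
  have hnorm : ∀ y : Fin n → ℝ, euclNorm y = ‖e y‖ := by
    intro y
    rw [EuclideanSpace.norm_eq]
    simp [euclNorm, heapp, Real.norm_eq_abs, sq_abs]
  have heuclNonneg : ∀ y : Fin n → ℝ, 0 ≤ euclNorm y := fun y => Real.sqrt_nonneg _
  have habs : ∀ (y : Fin n → ℝ) i, |y i| ≤ euclNorm y := by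
    intro y i
    rw [← Real.sqrt_sq_eq_abs]
    exact Real.sqrt_le_sqrt
      (Finset.single_le_sum (fun j _ => sq_nonneg (y j)) (Finset.mem_univ i))
  have hle : ∀ y : Fin n → ℝ, ‖y‖ ≤ euclNorm y := fun y =>
    (pi_norm_le_iff_of_nonneg (heuclNonneg y)).2 fun i => by
      rw [Real.norm_eq_abs]; exact habs y i
  set G : ℝ → Fin n → ℝ := fun s => Real.exp (-s) • F s (X s) with hG
  -- continuity
  have hXc : ContinuousOn X (Set.Ici 0) := fun t ht => (hX t ht).continuousAt.continuousWithinAt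
  have hGcont : ContinuousOn G (Set.Ici 0) := by
    refine ContinuousOn.smul (f := fun s : ℝ => Real.exp (-s)) (g := fun s => F s (X s)) ?_ ?_
    · exact (Real.continuous_exp.comp continuous_neg).continuousOn
    · exact hF.comp_continuousOn (continuousOn_id.prodMk hXc)
  -- bounds
  have hGbound : ∀ s : ℝ, 0 ≤ s → ‖e (G s)‖ ≤ A * Real.exp (-(2*s)) := by
    intro s hs
    have h1 : e (G s) = Real.exp (-s) • e (F s (X s)) := by rw [hG]; exact map_smul e _ _
    rw [h1, norm_smul, Real.norm_eq_abs, abs_of_pos (Real.exp_pos _)]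
    calc Real.exp (-s) * ‖e (F s (X s))‖
        ≤ Real.exp (-s) * (A * Real.exp (-s)) :=
          mul_le_mul_of_nonneg_left (by rw [← hnorm]; exact hFbound s hs _) (Real.exp_pos _).le
      _ = A * Real.exp (-(2*s)) := by
          rw [show (-(2*s):ℝ) = -s + -s by ring, Real.exp_add]; ring
  have hdom : ∀ t : ℝ, IntegrableOn (fun s => A * Real.exp (-(2*s))) (Set.Ioi t) := by
    intro t
    have := (exp_neg_integrableOn_Ioi t (by norm_num : (0:ℝ) < 2)).const_mul A
    simp only [neg_mul] at this; exact this
  have hGint : ∀ t : ℝ, 0 ≤ t → IntegrableOn G (Set.Ioi t) := by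
    intro t ht
    apply Integrable.mono' (hdom t)
    · exact (hGcont.mono fun s hs => le_trans ht (le_of_lt hs)).aestronglyMeasurable
        measurableSet_Ioi
    · rw [ae_restrict_iff' measurableSet_Ioi]
      filter_upwards with s hs
      exact le_trans (le_trans (hle _) ((hnorm _).le)) (hGbound s (le_trans ht hs.le))
  -- the function H
  set H : ℝ → Fin n → ℝ := fun t => Real.exp (-t) • (X t + V t) with hH
  have hHderiv : ∀ t : ℝ, 0 ≤ t → HasDerivAt H (-(G t)) t := by
    intro t ht
    have h1 : HasDerivAt (fun t : ℝ => Real.exp (-t)) (-Real.exp (-t)) t := by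
      exact ((Real.hasDerivAt_exp (-t)).comp t (hasDerivAt_neg t)).congr_deriv (by ring)
    have h2 := h1.smul ((hX t ht).add (hV t ht))
    refine h2.congr_deriv ?_
    rw [hG]
    simp only [neg_smul, smul_add, smul_sub, Pi.add_apply]
    abel
  -- FTC on [0, t]
  have hfund : ∀ t : ℝ, 0 ≤ t → (x + v) - (∫ s in (0:ℝ)..t, G s) = H t := by
    intro t ht
    have hsub : Set.uIcc (0:ℝ) t ⊆ Set.Ici 0 := by
      rw [Set.uIcc_of_le ht]; exact Set.Icc_subset_Ici_self
    have hftc : ∫ s in (0:ℝ)..t, -(G s) = H t - H 0 :=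
      intervalIntegral.integral_eq_sub_of_hasDerivAt
        (fun s hs => hHderiv s (hsub hs))
        ((hGcont.mono hsub).neg.intervalIntegrable)
    have hH0 : H 0 = x + v := by simp [hH, hX0, hV0]
    rw [intervalIntegral.integral_neg] at hftc
    have h7 : H t = -(∫ s in (0:ℝ)..t, G s) + H 0 := sub_eq_iff_eq_add.mp hftc.symm
    rw [← hH0, h7]
    abel
  -- key identity : e^{-t} (X t + V t) = tail integral
  have key : ∀ t : ℝ, 0 ≤ t → H t = ∫ s in Set.Ioi t, G s := by
    intro t ht
    have hsplit : ∫ s in Set.Ioi (0:ℝ), G s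
        = (∫ s in Set.Ioc 0 t, G s) + ∫ s in Set.Ioi t, G s := by
      rw [← MeasureTheory.setIntegral_union (Set.Ioc_disjoint_Ioi le_rfl) measurableSet_Ioi
        ((hGint 0 le_rfl).mono_set Set.Ioc_subset_Ioi_self) (hGint t ht),
        Set.Ioc_union_Ioi_eq_Ioi ht]
    have h2 : (∫ s in (0:ℝ)..t, G s) = ∫ s in Set.Ioc 0 t, G s :=
      intervalIntegral.integral_of_le ht
    have h3 := hfund t ht
    rw [h2, hxv] at h3
    rw [← hG] at h3
    rw [hsplit] at h3
    rw [← h3]; abel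
  -- tail integral value
  have tail : ∀ t : ℝ, ∫ s in Set.Ioi t, A * Real.exp (-(2*s)) = A/2 * Real.exp (-(2*t)) := by
    intro t
    have hderiv : ∀ s ∈ Set.Ici t, HasDerivAt (fun u => -(A/2) * Real.exp (-(2*u)))
        (A * Real.exp (-(2*s))) s := by
      intro s _
      have h1 : HasDerivAt (fun u : ℝ => -(2*u)) (-2) s := by
        exact ((hasDerivAt_id s).const_mul (2:ℝ)).neg.congr_deriv (by ring)
      have h2 := (Real.hasDerivAt_exp (-(2*s))).comp s h1
      have h3 := h2.const_mul (-(A/2))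
      refine h3.congr_deriv ?_
      ring
    have htend : Tendsto (fun u => -(A/2) * Real.exp (-(2*u))) atTop (nhds 0) := by
      have h1 : Tendsto (fun u : ℝ => 2*u) atTop atTop :=
        (tendsto_id.const_mul_atTop (by norm_num : (0:ℝ) < 2))
      have h2 : Tendsto (fun u : ℝ => Real.exp (-(2*u))) atTop (nhds 0) :=
        Real.tendsto_exp_neg_atTop_nhds_zero.comp h1
      simpa using h2.const_mul (-(A/2))
    rw [MeasureTheory.integral_Ioi_of_hasDerivAt_of_tendsto' hderiv (hdom t) htend]
    ring
  -- part 1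
  have part1 : ∀ t : ℝ, 0 ≤ t → euclNorm (X t + V t) ≤ (A / 2) * Real.exp (-t) := by
    intro t ht
    have hk := key t ht
    have hnormH : ‖e (H t)‖ = Real.exp (-t) * euclNorm (X t + V t) := by
      rw [hnorm]
      simp only [hH]
      rw [_root_.map_smul e, norm_smul, Real.norm_eq_abs, abs_of_pos (Real.exp_pos _)]
    have hcomm : e (∫ s in Set.Ioi t, G s) = ∫ s in Set.Ioi t, e (G s) :=
      (ContinuousLinearEquiv.integral_comp_comm e G).symm
    have hb : ‖∫ s in Set.Ioi t, e (G s)‖ ≤ A/2 * Real.exp (-(2*t)) := by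
      rw [← tail t]
      apply norm_integral_le_of_norm_le (hdom t)
      rw [ae_restrict_iff' measurableSet_Ioi]
      filter_upwards with s hs
      exact hGbound s (le_trans ht hs.le)
    have h5 : Real.exp (-t) * euclNorm (X t + V t) ≤ A/2 * Real.exp (-(2*t)) := by
      rw [← hnormH, hk, hcomm]; exact hb
    have h6 := mul_le_mul_of_nonneg_left h5 (Real.exp_pos t).le
    calc euclNorm (X t + V t)
        = Real.exp t * (Real.exp (-t) * euclNorm (X t + V t)) := by
          rw [← mul_assoc, ← Real.exp_add]; simp
      _ ≤ Real.exp t * (A/2 * Real.exp (-(2*t))) := h6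
      _ = A/2 * (Real.exp t * Real.exp (-t)) * Real.exp (-t) := by
          rw [show (-(2*t):ℝ) = -t + -t by ring, Real.exp_add]; ring
      _ = A/2 * Real.exp (-t) := by rw [← Real.exp_add]; simp
  refine ⟨part1, ?_⟩
  -- part 2
  apply squeeze_zero_norm' (a := fun t => A/2 * Real.exp (-t))
  · filter_upwards [eventually_ge_atTop (0:ℝ)] with t ht
    have h1 : Real.exp t • (x + v - ∫ s in (0:ℝ)..t, G s) = X t + V t := by
      rw [hfund t ht]
      simp only [hH]
      rw [smul_smul, ← Real.exp_add]
      simp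
    rw [h1]
    exact le_trans (hle _) (part1 t ht)
  · have h2 : Tendsto (fun t : ℝ => Real.exp (-t)) atTop (nhds 0) :=
      Real.tendsto_exp_neg_atTop_nhds_zero
    simpa using h2.const_mul (A/2)
end

section
/- Let F : [0,∞) × ℝⁿ → ℝⁿ be continuous with |F(t,y)| ≤ A e^{−t}, and let (X(t,x,v),V(t,x,v)) solve X′ = V, V′ = X − F(t,X) with data (x,v). If x + v ≠ ∫₀^∞ e^{−s}F(s,X(s,x,v))ds, then |X(t,x,v)| → ∞ and |V(t,x,v)| → ∞ as t → ∞. -/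
open MeasureTheory Filter

lemma norm_le_euclNorm {n : ℕ} (y : Fin n → ℝ) : ‖y‖ ≤ euclNorm y := by
  rw [euclNorm, pi_norm_le_iff_of_nonneg (Real.sqrt_nonneg _)]
  intro i
  rw [Real.norm_eq_abs, ← Real.sqrt_sq_eq_abs]
  exact Real.sqrt_le_sqrt (Finset.single_le_sum (f := fun j => y j ^ 2) (fun j _ => sq_nonneg _)
    (Finset.mem_univ i))

/-- if `x + v ≠ ∫₀^∞ e^{−s} F(s,X(s)) ds`, then `|X(t)| → ∞` and
`|V(t)| → ∞` as `t → ∞`. -/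
theorem stmt15 {n : ℕ} (F : ℝ → (Fin n → ℝ) → (Fin n → ℝ))
    (hF : Continuous (fun p : ℝ × (Fin n → ℝ) => F p.1 p.2))
    (A : ℝ) (hA : 0 < A)
    (hFbound : ∀ t : ℝ, 0 ≤ t → ∀ y : Fin n → ℝ, euclNorm (F t y) ≤ A * Real.exp (-t))
    (X V : ℝ → Fin n → ℝ) (x v : Fin n → ℝ)
    (hX0 : X 0 = x) (hV0 : V 0 = v)
    (hX : ∀ t : ℝ, 0 ≤ t → HasDerivAt X (V t) t)
    (hV : ∀ t : ℝ, 0 ≤ t → HasDerivAt V (X t - F t (X t)) t)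
    (hxv : x + v ≠ ∫ s in Set.Ioi (0:ℝ), Real.exp (-s) • F s (X s)) :
    Tendsto (fun t => euclNorm (X t)) atTop atTop ∧
    Tendsto (fun t => euclNorm (V t)) atTop atTop := by
  have hXc : ContinuousOn X (Set.Ici 0) := fun s hs =>
    ((hX s hs).continuousAt).continuousWithinAt
  set G : ℝ → Fin n → ℝ := fun s => F s (X s) with hGdef
  have hGc : ContinuousOn G (Set.Ici 0) := by
    have := hF.comp_continuousOn (continuousOn_id.prodMk hXc); exact this
  have hGnorm : ∀ t : ℝ, 0 ≤ t → ‖G t‖ ≤ A * Real.exp (-t) := fun t ht =>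
    (norm_le_euclNorm _).trans (hFbound t ht (X t))
  -- the integrand
  set g : ℝ → Fin n → ℝ := fun s => Real.exp (-s) • G s with hgdef
  have hgc : ContinuousOn g (Set.Ici 0) :=
    ((Real.continuous_exp.comp continuous_neg).continuousOn).smul hGc
  have hgint : IntegrableOn g (Set.Ioi 0) := by
    apply Integrable.mono' (g := fun s => A * Real.exp (-(2:ℝ) * s))
    · exact (exp_neg_integrableOn_Ioi 0 (by norm_num)).const_mul A
    · exact (hgc.mono Set.Ioi_subset_Ici_self).aestronglyMeasurable measurableSet_Ioi
    · filter_upwards [ae_restrict_mem measurableSet_Ioi] with s hs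
      have hs' : (0:ℝ) ≤ s := le_of_lt hs
      rw [norm_smul, Real.norm_eq_abs, abs_of_pos (Real.exp_pos _)]
      calc Real.exp (-s) * ‖G s‖ ≤ Real.exp (-s) * (A * Real.exp (-s)) := by
            exact mul_le_mul_of_nonneg_left (hGnorm s hs') (Real.exp_pos _).le
        _ = A * Real.exp (-(2:ℝ) * s) := by
            rw [show (-(2:ℝ) * s) = -s + -s by ring, Real.exp_add]; ring
  -- representation of e^{-t} (X+V)
  have key1 : ∀ t : ℝ, 0 ≤ t →
      Real.exp (-t) • (X t + V t) = (x + v) - ∫ s in (0:ℝ)..t, g s := by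
    intro t ht
    have hIcc : Set.uIcc (0:ℝ) t = Set.Icc 0 t := Set.uIcc_of_le ht
    have hderiv : ∀ s ∈ Set.uIcc (0:ℝ) t,
        HasDerivAt (fun s => Real.exp (-s) • (X s + V s)) (-(g s)) s := by
      intro s hs
      rw [hIcc] at hs
      have hs0 : (0:ℝ) ≤ s := hs.1
      have hc : HasDerivAt (fun s : ℝ => Real.exp (-s)) (-Real.exp (-s)) s := by
        simpa using (hasDerivAt_neg s).exp
      have := hc.smul ((hX s hs0).add (hV s hs0))
      refine this.congr_deriv ?_
      simp only [hgdef, hGdef, Pi.add_apply]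
      module
    have hint : IntervalIntegrable (fun s => -(g s)) volume 0 t := by
      apply ContinuousOn.intervalIntegrable
      rw [hIcc]
      exact (hgc.mono (Set.Icc_subset_Ici_self)).neg
    have := intervalIntegral.integral_eq_sub_of_hasDerivAt hderiv hint
    rw [intervalIntegral.integral_neg] at this
    have h0 : Real.exp (-(0:ℝ)) • (X 0 + V 0) = x + v := by simp [hX0, hV0]
    rw [h0] at this
    rw [sub_eq_add_neg, this]
    abel
  have key2 : ∀ t : ℝ, 0 ≤ t →
      Real.exp t • (X t - V t) = (x - v) + ∫ s in (0:ℝ)..t, Real.exp s • G s := by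
    intro t ht
    have hIcc : Set.uIcc (0:ℝ) t = Set.Icc 0 t := Set.uIcc_of_le ht
    have hderiv : ∀ s ∈ Set.uIcc (0:ℝ) t,
        HasDerivAt (fun s => Real.exp s • (X s - V s)) (Real.exp s • G s) s := by
      intro s hs
      rw [hIcc] at hs
      have hs0 : (0:ℝ) ≤ s := hs.1
      have hc : HasDerivAt (fun s : ℝ => Real.exp s) (Real.exp s) s :=
        Real.hasDerivAt_exp s
      have := hc.smul ((hX s hs0).sub (hV s hs0))
      refine this.congr_deriv ?_
      simp only [hGdef, Pi.sub_apply]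
      module
    have hint : IntervalIntegrable (fun s => Real.exp s • G s) volume 0 t := by
      apply ContinuousOn.intervalIntegrable
      rw [hIcc]
      exact (Real.continuous_exp.continuousOn).smul
        (hGc.mono (Set.Icc_subset_Ici_self))
    have := intervalIntegral.integral_eq_sub_of_hasDerivAt hderiv hint
    have h0 : Real.exp (0:ℝ) • (X 0 - V 0) = x - v := by simp [hX0, hV0]
    rw [h0] at this
    rw [this]
    abel
  -- the limit L
  set L : Fin n → ℝ := (x + v) - ∫ s in Set.Ioi (0:ℝ), g s with hLdef
  have hL : L ≠ 0 := sub_ne_zero.mpr hxv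
  have tendInt : Tendsto (fun t => ∫ s in (0:ℝ)..t, g s) atTop
      (nhds (∫ s in Set.Ioi (0:ℝ), g s)) :=
    intervalIntegral_tendsto_integral_Ioi 0 hgint tendsto_id
  have tend1 : Tendsto (fun t => Real.exp (-t) • (X t + V t)) atTop (nhds L) := by
    apply Tendsto.congr' _ (tendsto_const_nhds.sub tendInt)
    filter_upwards [eventually_ge_atTop (0:ℝ)] with t ht
    exact (key1 t ht).symm
  -- |X+V| → ∞
  have hW : Tendsto (fun t => ‖X t + V t‖) atTop atTop := by
    have hnL : 0 < ‖L‖ := norm_pos_iff.mpr hL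
    have tendn : Tendsto (fun t => Real.exp (-t) * ‖X t + V t‖) atTop (nhds ‖L‖) :=
      Tendsto.congr (fun t => by
        rw [norm_smul, Real.norm_eq_abs, abs_of_pos (Real.exp_pos _)]) tend1.norm
    have hev : ∀ᶠ t in atTop, ‖L‖ / 2 * Real.exp t ≤ ‖X t + V t‖ := by
      filter_upwards [tendn.eventually (eventually_ge_nhds
        (by linarith : ‖L‖/2 < ‖L‖))] with t ht
      have h1 := mul_le_mul_of_nonneg_left ht (Real.exp_pos t).le
      rwa [← mul_assoc, ← Real.exp_add, add_neg_cancel, Real.exp_zero, one_mul,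
        mul_comm (Real.exp t)] at h1
    exact tendsto_atTop_mono' _ hev
      (Tendsto.const_mul_atTop (by positivity) Real.tendsto_exp_atTop)
  -- bound on X - V
  have hD : ∀ t : ℝ, 0 ≤ t → ‖X t - V t‖ ≤ ‖x - v‖ + A := by
    intro t ht
    have hInorm : ‖∫ s in (0:ℝ)..t, Real.exp s • G s‖ ≤ A * t := by
      have := intervalIntegral.norm_integral_le_of_norm_le_const
        (C := A) (f := fun s => Real.exp s • G s) (a := (0:ℝ)) (b := t) ?_
      · rwa [sub_zero, abs_of_nonneg ht] at this
      · intro s hs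
        rw [Set.uIoc_of_le ht] at hs
        have hs0 : (0:ℝ) ≤ s := hs.1.le
        rw [norm_smul, Real.norm_eq_abs, abs_of_pos (Real.exp_pos _)]
        calc Real.exp s * ‖G s‖ ≤ Real.exp s * (A * Real.exp (-s)) :=
              mul_le_mul_of_nonneg_left (hGnorm s hs0) (Real.exp_pos _).le
          _ = A * (Real.exp s * Real.exp (-s)) := by ring
          _ = A := by rw [← Real.exp_add, add_neg_cancel, Real.exp_zero, mul_one]
    have hk : Real.exp t * ‖X t - V t‖ ≤ ‖x - v‖ + A * t := by
      have h2 : ‖Real.exp t • (X t - V t)‖ ≤ ‖x - v‖ + A * t := by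
        rw [key2 t ht]
        exact (norm_add_le _ _).trans (add_le_add le_rfl hInorm)
      rwa [norm_smul, Real.norm_eq_abs, abs_of_pos (Real.exp_pos t)] at h2
    have he1 : (1:ℝ) ≤ Real.exp t := Real.one_le_exp ht
    have he2 : t ≤ Real.exp t := (Real.add_one_le_exp t).trans' (by linarith)
    nlinarith [norm_nonneg (X t - V t), norm_nonneg (x - v)]
  -- conclude
  constructor
  · have hev : ∀ᶠ t in atTop,
        ‖X t + V t‖ / 2 + -((‖x - v‖ + A) / 2) ≤ euclNorm (X t) := by
      filter_upwards [eventually_ge_atTop (0:ℝ)] with t ht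
      have h1 : X t + V t = X t + X t - (X t - V t) := by abel
      have h2 : ‖X t + V t‖ ≤ (‖X t‖ + ‖X t‖) + (‖x - v‖ + A) := by
        rw [h1]
        exact (norm_sub_le _ _).trans (add_le_add (norm_add_le _ _) (hD t ht))
      have h3 := norm_le_euclNorm (X t)
      linarith
    exact tendsto_atTop_mono' _ hev
      (tendsto_atTop_add_const_right _ _ (hW.atTop_div_const two_pos))
  · have hev : ∀ᶠ t in atTop,
        ‖X t + V t‖ / 2 + -((‖x - v‖ + A) / 2) ≤ euclNorm (V t) := by
      filter_upwards [eventually_ge_atTop (0:ℝ)] with t ht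
      have h1 : X t + V t = V t + V t + (X t - V t) := by abel
      have h2 : ‖X t + V t‖ ≤ (‖V t‖ + ‖V t‖) + (‖x - v‖ + A) := by
        rw [h1]
        exact (norm_add_le _ _).trans (add_le_add (norm_add_le _ _) (hD t ht))
      have h3 := norm_le_euclNorm (V t)
      linarith
    exact tendsto_atTop_mono' _ hev
      (tendsto_atTop_add_const_right _ _ (hW.atTop_div_const two_pos))
end
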